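/- Let K be an algebraically closed field and consider the filtration F on K[x,y] with F_0 = K, F_1 = K-span{1, x, y, x^3}, F_k = F_1^k for k > 1. Let φ: 𝔸²_K → ℙ³_K be φ(x,y) = [1 : x : y : x³], and let X^F be the closure of φ(𝔸²) in ℙ³. Then for every a = (a_1, a_2) ∈ K², the closures in X^F of the curves H_1(a) = {(a_1, y) : y ∈ K} and H_2(a) = {(x, a_2 − x³) : x ∈ K} meet the hypersurface at infinity X^F \ φ(𝔸²) only in the points [0:0:1:0] and [0:0:−1:1] respectively; in particular their closures do not intersect at infinity. -/

import Mathlib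

open MvPolynomial

/-- The Zariski closure of a set of points of the projective space `ℙⁿ(K)`: the set of
points at which every homogeneous polynomial vanishing on `S` vanishes. -/
def zariskiClosure {K : Type*} [Field K] {n : ℕ}
    (S : Set (Projectivization K (Fin n → K))) : Set (Projectivization K (Fin n → K)) :=
  {x | ∀ (m : ℕ) (p : MvPolynomial (Fin n) K), p.IsHomogeneous m →
    (∀ y ∈ S, MvPolynomial.eval y.rep p = 0) → MvPolynomial.eval x.rep p = 0}

/-- The embedding `φ : 𝔸² → ℙ³`, `(x, y) ↦ [1 : x : y : x³]`, associated to the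
filtration with `F₁ = K⟨1, x, y, x³⟩`. -/
noncomputable def phiF {K : Type*} [Field K] (p : K × K) :
    Projectivization K (Fin 4 → K) :=
  Projectivization.mk K ![1, p.1, p.2, p.1 ^ 3]
    (by intro h; have := congrFun h 0; simp at this)

lemma eval_smul_homog {K : Type*} [CommRing K] {n m : ℕ}
    {p : MvPolynomial (Fin n) K} (hp : p.IsHomogeneous m) (c : K) (v : Fin n → K) :
    eval (c • v) p = c ^ m * eval v p := by
  rw [eval_eq, eval_eq, Finset.mul_sum]
  refine Finset.sum_congr rfl fun d hd => ?_
  have hdeg : ∑ i ∈ d.support, d i = m := by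
    have h1 := hp (mem_support_iff.mp hd)
    rw [← h1]
    show _ = Finsupp.weight (fun _ => 1) d
    rw [← Finsupp.degree_eq_weight_one]
    rfl
  calc (coeff d p) * ∏ i ∈ d.support, (c • v) i ^ d i
      = coeff d p * ∏ i ∈ d.support, (c ^ d i * v i ^ d i) := by
        simp [Pi.smul_apply, smul_eq_mul, mul_pow]
    _ = c ^ m * (coeff d p * ∏ i ∈ d.support, v i ^ d i) := by
        rw [Finset.prod_mul_distrib, Finset.prod_pow_eq_pow_sum, hdeg]; ring

lemma rep_eval_zero_iff {K : Type*} [Field K] {n : ℕ} {v : Fin n → K} (hv : v ≠ 0)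
    {m : ℕ} {p : MvPolynomial (Fin n) K} (hp : p.IsHomogeneous m) :
    eval (Projectivization.mk K v hv).rep p = 0 ↔ eval v p = 0 := by
  obtain ⟨c, hc⟩ := Projectivization.exists_smul_eq_mk_rep K v hv
  rw [← hc, Units.smul_def, eval_smul_homog hp]
  simp [c.ne_zero]

lemma eval_aeval_poly {K : Type*} [CommRing K] {n : ℕ}
    (p : MvPolynomial (Fin n) K) (g : Fin n → Polynomial K) (t : K) :
    Polynomial.eval t (aeval g p) = eval (fun i => (g i).eval t) p := by
  have : Polynomial.eval t (aeval g p) =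
      (Polynomial.evalRingHom t) (eval₂ (algebraMap K (Polynomial K)) g p) := rfl
  rw [this, MvPolynomial.eval₂_comp_left (Polynomial.evalRingHom t)]
  rw [show ((Polynomial.evalRingHom t).comp (algebraMap K (Polynomial K))) = RingHom.id K by
    ext a; simp]
  rfl

lemma zc_mono {K : Type*} [Field K] {n : ℕ}
    {S T : Set (Projectivization K (Fin n → K))} (h : S ⊆ T) :
    zariskiClosure S ⊆ zariskiClosure T :=
  fun _x hx m p hp hv => hx m p hp fun y hy => hv y (h hy)

section Main

variable {K : Type*} [Field K]

lemma hcubic : IsHomogeneous (X 0 ^ 2 * X 3 - X 1 ^ 3 : MvPolynomial (Fin 4) K) 3 := by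
  have h1 := (((isHomogeneous_X K (0 : Fin 4)).pow 2).mul (isHomogeneous_X K 3))
  have h2 := ((isHomogeneous_X K (1 : Fin 4)).pow 3)
  norm_num at h1 h2
  exact h1.sub h2

lemma hlin (c : K) (i j : Fin 4) :
    IsHomogeneous (X i - C c * X j : MvPolynomial (Fin 4) K) 1 :=
  (isHomogeneous_X K i).sub ((isHomogeneous_X K j).C_mul c)

lemma hq2 (c : K) : IsHomogeneous (X 2 + X 3 - C c * X 0 : MvPolynomial (Fin 4) K) 1 :=
  ((isHomogeneous_X K 2).add (isHomogeneous_X K 3)).sub ((isHomogeneous_X K 0).C_mul c)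

lemma cubic_vanish :
    ∀ y ∈ Set.range (phiF (K := K)),
      eval y.rep (X 0 ^ 2 * X 3 - X 1 ^ 3 : MvPolynomial (Fin 4) K) = 0 := by
  rintro _ ⟨q, rfl⟩
  rw [phiF, rep_eval_zero_iff _ hcubic]
  simp

lemma not_in_range_of_v0_eq_zero {v : Fin 4 → K} (hv : v ≠ 0) (h0 : v 0 = 0) :
    Projectivization.mk K v hv ∉ Set.range (phiF (K := K)) := by
  rintro ⟨q, hq⟩
  rw [phiF, Projectivization.mk_eq_mk_iff] at hq
  obtain ⟨c, hc⟩ := hq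
  have := congrFun hc 0
  simp [h0] at this

lemma mem_range_phiF {v : Fin 4 → K} (hv : v ≠ 0) (h0 : v 0 ≠ 0)
    (hcub : v 0 ^ 2 * v 3 = v 1 ^ 3) :
    Projectivization.mk K v hv ∈ Set.range (phiF (K := K)) := by
  refine ⟨(v 1 / v 0, v 2 / v 0), ?_⟩
  rw [phiF, Projectivization.mk_eq_mk_iff]
  refine ⟨Units.mk0 (v 0)⁻¹ (inv_ne_zero h0), ?_⟩
  funext i
  fin_cases i <;>
    simp only [Units.smul_def, Units.val_mk0, Pi.smul_apply, smul_eq_mul, Matrix.cons_val_zero,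
      Matrix.cons_val_one, Matrix.head_cons, Matrix.cons_val_two, Matrix.tail_cons,
      Matrix.cons_val_three]
  · simp [h0]
  · simp [div_eq_inv_mul]
  · show (v 0)⁻¹ * v 2 = v 2 / v 0
    field_simp
  · show (v 0)⁻¹ * v 3 = (v 1 / v 0) ^ 3
    field_simp
    linear_combination hcub

lemma pt1_mem_closure [Infinite K] (a₁ : K) {v : Fin 4 → K} (hv : v ≠ 0)
    (h : v = ![0, 0, 1, 0]) :
    Projectivization.mk K v hv ∈ zariskiClosure (phiF '' {p : K × K | p.1 = a₁}) := by
  subst h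
  intro m p hp hvan
  rw [rep_eval_zero_iff _ hp]
  have hy : ∀ y : K, eval ![1, a₁, y, a₁ ^ 3] p = 0 := by
    intro y
    have := hvan (phiF (a₁, y)) ⟨(a₁, y), rfl, rfl⟩
    rwa [phiF, rep_eval_zero_iff _ hp] at this
  set g : Fin 4 → Polynomial K :=
    ![Polynomial.X, Polynomial.C a₁ * Polynomial.X, 1, Polynomial.C (a₁ ^ 3) * Polynomial.X]
    with hg
  have hzero : aeval g p = 0 := by
    apply Polynomial.eq_zero_of_infinite_isRoot
    apply Set.Infinite.mono (s := {(0 : K)}ᶜ) ?_ ((Set.finite_singleton 0).infinite_compl)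
    intro t ht
    have ht : t ≠ 0 := ht
    show Polynomial.eval t (aeval g p) = 0
    rw [eval_aeval_poly]
    have hfun : (fun i => (g i).eval t) = t • ![1, a₁, t⁻¹, a₁ ^ 3] := by
      funext i
      fin_cases i <;> simp [hg, ht] <;> ring
    rw [hfun, eval_smul_homog hp, hy t⁻¹, mul_zero]
  have h0 := congrArg (Polynomial.eval 0) hzero
  rw [eval_aeval_poly] at h0
  have hfun : (fun i => (g i).eval 0) = ![(0 : K), 0, 1, 0] := by
    funext i; fin_cases i <;> simp [hg]
  rw [hfun] at h0
  simpa using h0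

lemma pt2_mem_closure [Infinite K] (a₂ : K) {v : Fin 4 → K} (hv : v ≠ 0)
    (h : v = ![0, 0, -1, 1]) :
    Projectivization.mk K v hv ∈
      zariskiClosure (phiF '' {p : K × K | p.2 = a₂ - p.1 ^ 3}) := by
  subst h
  intro m p hp hvan
  rw [rep_eval_zero_iff _ hp]
  have hy : ∀ x : K, eval ![1, x, a₂ - x ^ 3, x ^ 3] p = 0 := by
    intro x
    have := hvan (phiF (x, a₂ - x ^ 3)) ⟨(x, a₂ - x ^ 3), rfl, rfl⟩
    rwa [phiF, rep_eval_zero_iff _ hp] at this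
  set g : Fin 4 → Polynomial K :=
    ![Polynomial.X ^ 3, Polynomial.X ^ 2, Polynomial.C a₂ * Polynomial.X ^ 3 - 1, 1]
    with hg
  have hzero : aeval g p = 0 := by
    apply Polynomial.eq_zero_of_infinite_isRoot
    apply Set.Infinite.mono (s := {(0 : K)}ᶜ) ?_ ((Set.finite_singleton 0).infinite_compl)
    intro t ht
    have ht : t ≠ 0 := ht
    show Polynomial.eval t (aeval g p) = 0
    rw [eval_aeval_poly]
    have hfun : (fun i => (g i).eval t) =
        (t ^ 3) • ![1, t⁻¹, a₂ - (t⁻¹) ^ 3, (t⁻¹) ^ 3] := by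
      funext i
      fin_cases i <;> simp [hg, ht] <;> field_simp <;> ring
    rw [hfun, eval_smul_homog hp, hy t⁻¹, mul_zero]
  have h0 := congrArg (Polynomial.eval 0) hzero
  rw [eval_aeval_poly] at h0
  have hfun : (fun i => (g i).eval 0) = ![(0 : K), 0, -1, 1] := by
    funext i; fin_cases i <;> simp [hg]
  rw [hfun] at h0
  simpa using h0


lemma infinity_v0 {K : Type*} [Field K] {v : Fin 4 → K} (hv : v ≠ 0)
    (hB : Projectivization.mk K v hv ∈ zariskiClosure (Set.range (phiF (K := K))))
    (hnr : Projectivization.mk K v hv ∉ Set.range (phiF (K := K))) :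
    v 0 = 0 ∧ v 1 = 0 := by
  have hc := hB 3 _ hcubic cubic_vanish
  rw [rep_eval_zero_iff _ hcubic] at hc
  simp only [map_sub, map_mul, map_pow, eval_X] at hc
  have hcub : v 0 ^ 2 * v 3 = v 1 ^ 3 := by linear_combination hc
  have h0 : v 0 = 0 := by
    by_contra h0
    exact hnr (mem_range_phiF hv h0 hcub)
  refine ⟨h0, ?_⟩
  have h3 : v 1 ^ 3 = 0 := by rw [← hcub, h0]; ring
  exact pow_eq_zero_iff (n := 3) (by norm_num) |>.mp h3

lemma line1_eval {K : Type*} [Field K] (a₁ : K) {v : Fin 4 → K} (hv : v ≠ 0)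
    (hA : Projectivization.mk K v hv ∈ zariskiClosure (phiF '' {p : K × K | p.1 = a₁})) :
    v 1 = a₁ * v 0 ∧ v 3 = a₁ ^ 3 * v 0 := by
  constructor
  · have h := hA 1 (X 1 - C a₁ * X 0) (hlin a₁ 1 0) ?_
    · rw [rep_eval_zero_iff _ (hlin a₁ 1 0)] at h
      simp only [map_sub, map_mul, eval_C, eval_X] at h
      linear_combination h
    · rintro _ ⟨⟨x, y⟩, hx, rfl⟩
      have hx : x = a₁ := hx
      rw [phiF, rep_eval_zero_iff _ (hlin a₁ 1 0)]
      simp [hx]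
  · have h := hA 1 (X 3 - C (a₁ ^ 3) * X 0) (hlin (a₁ ^ 3) 3 0) ?_
    · rw [rep_eval_zero_iff _ (hlin (a₁ ^ 3) 3 0)] at h
      simp only [map_sub, map_mul, eval_C, eval_X] at h
      linear_combination h
    · rintro _ ⟨⟨x, y⟩, hx, rfl⟩
      have hx : x = a₁ := hx
      rw [phiF, rep_eval_zero_iff _ (hlin (a₁ ^ 3) 3 0)]
      simp [hx]

lemma curve2_eval {K : Type*} [Field K] (a₂ : K) {v : Fin 4 → K} (hv : v ≠ 0)
    (hC : Projectivization.mk K v hv ∈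
      zariskiClosure (phiF '' {p : K × K | p.2 = a₂ - p.1 ^ 3})) :
    v 2 + v 3 = a₂ * v 0 := by
  have h := hC 1 (X 2 + X 3 - C a₂ * X 0) (hq2 a₂) ?_
  · rw [rep_eval_zero_iff _ (hq2 a₂)] at h
    simp only [map_sub, map_add, map_mul, eval_C, eval_X] at h
    linear_combination h
  · rintro _ ⟨⟨x, y⟩, hxy, rfl⟩
    have hxy : y = a₂ - x ^ 3 := hxy
    rw [phiF, rep_eval_zero_iff _ (hq2 a₂)]
    simp [hxy]

end Main

/-- For the completion `X^F` of `𝔸²` given by `φ(x,y) = [1:x:y:x³]`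
and every `a = (a₁, a₂) ∈ K²`, the closure of the curve `H₁(a) = {x = a₁}` meets the set
at infinity `X^F ∖ φ(𝔸²)` exactly in `[0:0:1:0]`, the closure of the curve
`H₂(a) = {y = a₂ - x³}` meets it exactly in `[0:0:-1:1]`; in particular the two closures
do not intersect at infinity. -/
theorem closures_at_infinity_xF
    {K : Type*} [Field K] [IsAlgClosed K] (a₁ a₂ : K) :
    zariskiClosure (phiF '' {p : K × K | p.1 = a₁}) ∩
        (zariskiClosure (Set.range (phiF (K := K))) \ Set.range (phiF (K := K))) =
      {Projectivization.mk K ![0, 0, 1, 0]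
        (by intro h; have := congrFun h 2; simp at this)} ∧
    zariskiClosure (phiF '' {p : K × K | p.2 = a₂ - p.1 ^ 3}) ∩
        (zariskiClosure (Set.range (phiF (K := K))) \ Set.range (phiF (K := K))) =
      {Projectivization.mk K ![0, 0, -1, 1]
        (by intro h; have := congrFun h 3; simp at this)} ∧
    zariskiClosure (phiF '' {p : K × K | p.1 = a₁}) ∩
        zariskiClosure (phiF '' {p : K × K | p.2 = a₂ - p.1 ^ 3}) ∩
        (zariskiClosure (Set.range (phiF (K := K))) \ Set.range (phiF (K := K))) =
      ∅ := by
  have hsub1 : (phiF '' {p : K × K | p.1 = a₁}) ⊆ Set.range (phiF (K := K)) :=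
    Set.image_subset_range _ _
  have hsub2 : (phiF '' {p : K × K | p.2 = a₂ - p.1 ^ 3}) ⊆ Set.range (phiF (K := K)) :=
    Set.image_subset_range _ _
  have key1 : zariskiClosure (phiF '' {p : K × K | p.1 = a₁}) ∩
      (zariskiClosure (Set.range (phiF (K := K))) \ Set.range (phiF (K := K))) =
      {Projectivization.mk K ![0, 0, 1, 0]
        (by intro h; have := congrFun h 2; simp at this)} := by
    apply Set.Subset.antisymm
    · intro x hx
      induction x using Projectivization.ind with
      | h v hv =>
        obtain ⟨hA, hB, hnr⟩ := hx
        obtain ⟨h0, h1⟩ := infinity_v0 hv hB hnr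
        obtain ⟨_, h3⟩ := line1_eval a₁ hv hA
        rw [h0, mul_zero] at h3
        have h2 : v 2 ≠ 0 := by
          intro h2
          apply hv
          funext i
          fin_cases i <;> simp [h0, h1, h2, h3]
        show _ = _
        rw [Projectivization.mk_eq_mk_iff']
        exact ⟨v 2, by funext i; fin_cases i <;> simp [h0, h1, h2, h3]⟩
    · rw [Set.singleton_subset_iff]
      exact ⟨pt1_mem_closure a₁ _ rfl,
        zc_mono hsub1 (pt1_mem_closure a₁ _ rfl),
        not_in_range_of_v0_eq_zero _ (by simp)⟩
  have key2 : zariskiClosure (phiF '' {p : K × K | p.2 = a₂ - p.1 ^ 3}) ∩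
      (zariskiClosure (Set.range (phiF (K := K))) \ Set.range (phiF (K := K))) =
      {Projectivization.mk K ![0, 0, -1, 1]
        (by intro h; have := congrFun h 3; simp at this)} := by
    apply Set.Subset.antisymm
    · intro x hx
      induction x using Projectivization.ind with
      | h v hv =>
        obtain ⟨hC, hB, hnr⟩ := hx
        obtain ⟨h0, h1⟩ := infinity_v0 hv hB hnr
        have h23 := curve2_eval a₂ hv hC
        rw [h0, mul_zero] at h23
        have h2 : v 2 = -v 3 := by linear_combination h23
        have h3 : v 3 ≠ 0 := by
          intro h3
          apply hv
          funext i
          fin_cases i <;> simp [h0, h1, h2, h3]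
        show _ = _
        rw [Projectivization.mk_eq_mk_iff']
        exact ⟨v 3, by funext i; fin_cases i <;> simp [h0, h1, h2, h3]⟩
    · rw [Set.singleton_subset_iff]
      exact ⟨pt2_mem_closure a₂ _ rfl,
        zc_mono hsub2 (pt2_mem_closure a₂ _ rfl),
        not_in_range_of_v0_eq_zero _ (by simp)⟩
  refine ⟨key1, key2, ?_⟩
  ext x
  simp only [Set.mem_inter_iff, Set.mem_empty_iff_false, iff_false]
  rintro ⟨⟨hA, hC⟩, hI⟩
  have e1 : x ∈ ({Projectivization.mk K ![0, 0, 1, 0]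
      (by intro h; have := congrFun h 2; simp at this)} :
        Set (Projectivization K (Fin 4 → K))) := key1 ▸ (⟨hA, hI⟩ : _ ∧ _)
  have e2 : x ∈ ({Projectivization.mk K ![0, 0, -1, 1]
      (by intro h; have := congrFun h 3; simp at this)} :
        Set (Projectivization K (Fin 4 → K))) := key2 ▸ (⟨hC, hI⟩ : _ ∧ _)
  rw [Set.mem_singleton_iff] at e1 e2
  rw [e1] at e2
  rw [Projectivization.mk_eq_mk_iff] at e2
  obtain ⟨c, hc⟩ := e2
  have h3 := congrFun hc 3
  simp [Units.smul_def] at h3
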